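/- Let G be a valued group. The following are equivalent: (a) for all f, g ∈ G, f*g ≍ g*f; (b) for every f ∈ G and every k ∈ G with k ≠ 1, the right ball equals the left ball: {h ∈ G : f⁻¹*h ≺ k} = {h ∈ G : h*f⁻¹ ≺ k}. -/
import Mathlib


variable {G : Type*} [Group G]

/-- `f ≺ g` : strict part of the dominance relation. -/
def vlt (le : G → G → Prop) (f g : G) : Prop := le f g ∧ ¬ le g f

/-- `f ≍ g` : equivalence induced by the dominance relation. -/
def veq (le : G → G → Prop) (f g : G) : Prop := le f g ∧ le g f

/-- A dominance relation on a group `G`, making it a valued group: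
a reflexive, transitive, total relation satisfying D1-D4. -/
structure IsValuation (le : G → G → Prop) : Prop where
  refl : ∀ f : G, le f f
  trans : ∀ f g h : G, le f g → le g h → le f h
  total : ∀ f g : G, le f g ∨ le g f
  d1 : ∀ f : G, f ≠ 1 → vlt le 1 f
  d2 : ∀ f g : G, le (f * g) f ∨ le (f * g) g
  d3 : ∀ f g h : G, le f g → le (h * f * h⁻¹) (h * g * h⁻¹)
  d4 : ∀ f : G, veq le f f⁻¹

/-- Lemma 7.1: `f*g ≍ g*f` for all `f, g` iff every right ball coincides with the
corresponding left ball. -/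
theorem mul_equiv_iff_balls_eq (le : G → G → Prop) (hv : IsValuation le) :
    (∀ f g : G, veq le (f * g) (g * f)) ↔
      (∀ f k : G, k ≠ 1 →
        {h : G | vlt le (f⁻¹ * h) k} = {h : G | vlt le (h * f⁻¹) k}) := by
  constructor
  · intro H f k _
    ext h
    simp only [Set.mem_setOf_eq]
    have h1 := H f⁻¹ h
    constructor
    · rintro ⟨a, b⟩
      exact ⟨hv.trans _ _ _ h1.2 a, fun c => b (hv.trans _ _ _ c h1.2)⟩
    · rintro ⟨a, b⟩
      exact ⟨hv.trans _ _ _ h1.1 a, fun c => b (hv.trans _ _ _ c h1.1)⟩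
  · intro H
    have claim : ∀ a h : G, le (a * h) (h * a) := by
      intro a h
      by_contra hn
      have hle : le (h * a) (a * h) := (hv.total _ _).resolve_left hn
      have hne : a * h ≠ 1 := by
        intro heq
        have : h = a⁻¹ := eq_inv_of_mul_eq_one_right heq
        apply hn
        subst this
        simp only [mul_inv_cancel, inv_mul_cancel]
        exact hv.refl 1
      have hs := H a⁻¹ (a * h) hne
      have hmem : h ∈ {x : G | vlt le (x * (a⁻¹)⁻¹) (a * h)} := by
        simp only [Set.mem_setOf_eq, inv_inv]
        exact ⟨hle, hn⟩
      rw [← hs] at hmem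
      simp only [Set.mem_setOf_eq, inv_inv] at hmem
      exact hmem.2 (hv.refl _)
    intro f g
    exact ⟨claim f g, claim g f⟩
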